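/- Let T > 0 and define X₁^per = { v ∈ H^1(0,T) : v(0) = v(T), max_{[0,T]} v + min_{[0,T]} v = 0 }. Then for every nonzero v ∈ X₁^per, ∫₀ᵀ v'(t)² dt ≥ (16/T)·‖v‖_∞², i.e. the infimum of I₁(v) = (∫₀ᵀ v'²)/‖v‖_∞² over X₁^per \ {0} is at least 16/T. -/

import Mathlib

open MeasureTheory intervalIntegral Set

lemma cs2 (p q A B x y : ℝ) (hp : 0 ≤ p) (hq : 0 ≤ q) (hA : 0 ≤ A) (hB : 0 ≤ B)
    (hx : x ^ 2 ≤ p * A) (hy : y ^ 2 ≤ q * B) : (x + y) ^ 2 ≤ (p + q) * (A + B) := by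
  nlinarith [sq_nonneg (p*B - q*A), sq_nonneg (x - y), sq_nonneg (x + y), sq_nonneg (x*y), mul_nonneg hp hB, mul_nonneg hq hA, mul_nonneg (mul_nonneg hp hA) (mul_nonneg hq hB), sq_nonneg (p*B + q*A - 2*x*y)]

lemma key (x y : ℝ) (hxy : x ≤ y) (f f' : ℝ → ℝ)
    (hf' : IntervalIntegrable f' volume x y)
    (hf'2 : IntervalIntegrable (fun t => f' t ^ 2) volume x y)
    (hftc : ∫ t in x..y, f' t = f y - f x) :
    (f y - f x) ^ 2 ≤ (y - x) * ∫ t in x..y, f' t ^ 2 := by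
  rcases eq_or_lt_of_le hxy with rfl | hlt
  · simp
  set c : ℝ := (f y - f x) / (y - x) with hc
  have hpos : 0 < y - x := by linarith
  have h0 : (0:ℝ) ≤ ∫ t in x..y, (f' t - c) ^ 2 :=
    intervalIntegral.integral_nonneg hxy (fun t _ => sq_nonneg _)
  have hexp : ∀ t, (f' t - c) ^ 2 = f' t ^ 2 - (2*c) * f' t + c ^ 2 := by intro t; ring
  have hint2 : IntervalIntegrable (fun t => (2*c) * f' t) volume x y := hf'.const_mul _
  have heq : (∫ t in x..y, (f' t - c) ^ 2)
      = (∫ t in x..y, f' t ^ 2) - (2*c) * (f y - f x) + c ^ 2 * (y - x) := by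
    simp_rw [hexp]
    rw [intervalIntegral.integral_add (hf'2.sub hint2) intervalIntegrable_const,
      intervalIntegral.integral_sub hf'2 hint2,
      intervalIntegral.integral_const_mul, hftc]
    simp [mul_comm]
  rw [heq] at h0
  have : c * (y - x) = f y - f x := by rw [hc]; field_simp
  nlinarith [this]

theorem stmt2 (T : ℝ) (hT : 0 < T) (v v' : ℝ → ℝ) (M m : ℝ)
    (hderiv : ∀ t ∈ Set.Icc (0:ℝ) T, HasDerivWithinAt v (v' t) (Set.Icc 0 T) t)
    (hint : IntervalIntegrable (fun t => (v' t) ^ 2) MeasureTheory.volume 0 T)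
    (hper : v 0 = v T)
    (hmax : IsGreatest (v '' Set.Icc 0 T) M)
    (hmin : IsLeast (v '' Set.Icc 0 T) m)
    (hsum : M + m = 0)
    (hne : ∃ t ∈ Set.Icc (0:ℝ) T, v t ≠ 0) :
    (16 / T) * M ^ 2 ≤ ∫ t in (0:ℝ)..T, (v' t) ^ 2 := by
  -- points achieving max and min
  obtain ⟨a, ha, hva⟩ := hmax.1
  obtain ⟨b, hb, hvb⟩ := hmin.1
  set u := min a b with hu
  set w := max a b with hw
  have huw : u ≤ w := min_le_max
  have hu0 : 0 ≤ u := le_min ha.1 hb.1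
  have hwT : w ≤ T := max_le ha.2 hb.2
  have hm : m = -M := by linarith
  have hdiff : (v w - v u) ^ 2 = 4 * M ^ 2 := by
    rcases le_total a b with h | h
    · rw [hu, hw, min_eq_left h, max_eq_right h, hva, hvb, hm]; ring
    · rw [hu, hw, min_eq_right h, max_eq_left h, hva, hvb, hm]; ring
  -- integrability of v'
  have hmeasg : Measurable (fun t : ℝ => derivWithin v (Set.Ici t) t) := measurable_derivWithin_Ici v
  have haeeq : ∀ᵐ t ∂volume.restrict (Set.uIoc (0:ℝ) T), v' t = derivWithin v (Set.Ici t) t := by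
    have h1 : ∀ᵐ t ∂volume.restrict (Set.uIoc (0:ℝ) T), t ∈ Set.uIoc (0:ℝ) T :=
      ae_restrict_mem measurableSet_uIoc
    have h2 : ∀ᵐ t : ℝ ∂volume, t ≠ T := by
      refine MeasureTheory.ae_iff.2 ?_
      have : {t : ℝ | ¬ t ≠ T} = {T} := by ext t; simp
      rw [this]; exact Real.volume_singleton
    filter_upwards [h1, MeasureTheory.ae_restrict_of_ae h2] with t ht htT
    rw [Set.uIoc_of_le hT.le] at ht
    have htIcc : t ∈ Set.Icc (0:ℝ) T := ⟨ht.1.le, ht.2⟩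
    have htlt : t < T := lt_of_le_of_ne ht.2 htT
    have hder : HasDerivWithinAt v (v' t) (Set.Ici t) t := by
      refine (hderiv t htIcc).mono_of_mem_nhdsWithin ?_
      refine Filter.mem_of_superset
        (Filter.inter_mem self_mem_nhdsWithin
          (mem_nhdsWithin_of_mem_nhds (Iic_mem_nhds htlt))) ?_
      rintro s ⟨hs1, hs2⟩
      exact ⟨le_trans ht.1.le hs1, hs2⟩
    exact (hder.derivWithin (uniqueDiffOn_Ici t t Set.self_mem_Ici)).symm
  have haeeq' : v' =ᶠ[ae (volume.restrict (Set.uIoc (0:ℝ) T))]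
      (fun t => derivWithin v (Set.Ici t) t) := haeeq
  have hmeasv' : AEStronglyMeasurable v' (volume.restrict (Set.uIoc (0:ℝ) T)) :=
    hmeasg.aestronglyMeasurable.congr haeeq'.symm
  have hone : IntervalIntegrable (fun t => 1 + v' t ^ 2) volume 0 T :=
    intervalIntegrable_const.add hint
  have hintv' : IntervalIntegrable v' volume 0 T := by
    refine hone.mono_fun hmeasv' ?_
    filter_upwards with t
    simp only [Real.norm_eq_abs]
    have h1 : |v' t| ≤ 1 + v' t ^ 2 := by nlinarith [abs_nonneg (v' t), sq_abs (v' t)]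
    have h2 : (0:ℝ) ≤ 1 + v' t ^ 2 := by positivity
    rwa [abs_of_nonneg h2]
  -- FTC on subintervals
  have hcont : ContinuousOn v (Set.Icc 0 T) := fun t ht => (hderiv t ht).continuousWithinAt
  have hftc : ∀ x y : ℝ, 0 ≤ x → x ≤ y → y ≤ T → ∫ t in x..y, v' t = v y - v x := by
    intro x y hx hxy hyT
    refine intervalIntegral.integral_eq_sub_of_hasDeriv_right_of_le hxy
      (hcont.mono (Set.Icc_subset_Icc hx hyT)) (fun t ht => ?_) ?_
    · have htI : t ∈ Set.Ioo (0:ℝ) T := ⟨lt_of_le_of_lt hx ht.1, lt_of_lt_of_le ht.2 hyT⟩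
      exact ((hderiv t (Set.Ioo_subset_Icc_self htI)).hasDerivAt
        (Icc_mem_nhds htI.1 htI.2)).hasDerivWithinAt
    · exact hintv'.mono_set (Set.uIcc_subset_uIcc
        (by simp [Set.mem_uIcc]; left; exact ⟨hx, le_trans hxy hyT⟩)
        (by simp [Set.mem_uIcc]; left; exact ⟨le_trans hx hxy, hyT⟩))
  have hsub : ∀ x y : ℝ, 0 ≤ x → x ≤ y → y ≤ T →
      IntervalIntegrable v' volume x y ∧ IntervalIntegrable (fun t => v' t ^ 2) volume x y := by
    intro x y hx hxy hyT
    have hss : Set.uIcc x y ⊆ Set.uIcc (0:ℝ) T :=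
      Set.uIcc_subset_uIcc (by simp [Set.mem_uIcc]; left; exact ⟨hx, le_trans hxy hyT⟩)
        (by simp [Set.mem_uIcc]; left; exact ⟨le_trans hx hxy, hyT⟩)
    exact ⟨hintv'.mono_set hss, hint.mono_set hss⟩
  obtain ⟨hi1, hi1'⟩ := hsub 0 u le_rfl hu0 (le_trans huw hwT)
  obtain ⟨hi2, hi2'⟩ := hsub u w hu0 huw hwT
  obtain ⟨hi3, hi3'⟩ := hsub w T (le_trans hu0 huw) hwT le_rfl
  set A := ∫ t in (0:ℝ)..u, v' t ^ 2 with hA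
  set B := ∫ t in u..w, v' t ^ 2 with hB
  set C := ∫ t in w..T, v' t ^ 2 with hC
  have hAnn : 0 ≤ A := intervalIntegral.integral_nonneg hu0 (fun t _ => sq_nonneg _)
  have hBnn : 0 ≤ B := intervalIntegral.integral_nonneg huw (fun t _ => sq_nonneg _)
  have hCnn : 0 ≤ C := intervalIntegral.integral_nonneg hwT (fun t _ => sq_nonneg _)
  have hsplit : (∫ t in (0:ℝ)..T, v' t ^ 2) = A + B + C := by
    rw [hA, hB, hC, intervalIntegral.integral_add_adjacent_intervals hi1' hi2',
      intervalIntegral.integral_add_adjacent_intervals (hi1'.trans hi2') hi3']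
  have k1 : (v u - v 0) ^ 2 ≤ u * A := by
    have := key 0 u hu0 v v' hi1 hi1' (hftc 0 u le_rfl hu0 (le_trans huw hwT))
    simpa using this
  have k2 : (v w - v u) ^ 2 ≤ (w - u) * B :=
    key u w huw v v' hi2 hi2' (hftc u w hu0 huw hwT)
  have k3 : (v T - v w) ^ 2 ≤ (T - w) * C :=
    key w T hwT v v' hi3 hi3' (hftc w T (le_trans hu0 huw) hwT le_rfl)
  have c1 : ((v u - v 0) + (v T - v w)) ^ 2 ≤ (u + (T - w)) * (A + C) :=
    cs2 u (T - w) A C _ _ hu0 (by linarith) hAnn hCnn k1 k3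
  have hx1 : (v u - v 0) + (v T - v w) = v u - v w := by rw [hper]; ring
  rw [hx1] at c1
  have k2' : (v u - v w) ^ 2 ≤ (w - u) * B := by
    have : (v u - v w) ^ 2 = (v w - v u) ^ 2 := by ring
    rw [this]; exact k2
  have c2 : ((v u - v w) + (v u - v w)) ^ 2 ≤ ((u + (T - w)) + (w - u)) * ((A + C) + B) :=
    cs2 _ _ _ _ _ _ (by linarith) (by linarith) (by linarith) hBnn c1 k2'
  have hfin : 16 * M ^ 2 ≤ T * (A + B + C) := by nlinarith [hdiff, c2]
  rw [hsplit, div_mul_eq_mul_div, div_le_iff₀ hT]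
  linarith [hfin]
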